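/- For all real numbers d > 0 and ε > 0, there exists γ > 0 such that the following holds: if G(n, d/n) denotes the random simple graph on n vertices in which each of the C(n,2) possible edges is present independently with probability min(d/n, 1), then the probability that there exists a vertex subset S with 2 ≤ |S| ≤ γ·n whose induced subgraph contains at least (1 + ε/2)·|S| edges (equivalently, has average degree at least 2 + ε) tends to 0 as n → ∞. -/

import Mathlib

open Filter Topology MeasureTheory

section AuxER
set_option maxHeartbeats 1000000

lemma aux_pow_le_three_pow_mul_factorial (k : ℕ) :
    (k : ℝ) ^ k ≤ 3 ^ k * (Nat.factorial k : ℝ) := by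
  induction k with
  | zero => simp
  | succ k ih =>
    rcases Nat.eq_zero_or_pos k with hk | hk
    · subst hk; norm_num
    have hk0 : (0:ℝ) < k := by exact_mod_cast hk
    have h1 : ((k:ℝ) + 1) ^ k ≤ 3 * (k:ℝ) ^ k := by
      have : ((k:ℝ) + 1) ^ k = (k:ℝ) ^ k * (1 + 1/(k:ℝ)) ^ k := by
        rw [← mul_pow]; congr 1; field_simp
      rw [this]
      have h2 : (1 + 1/(k:ℝ)) ^ k ≤ Real.exp (1/(k:ℝ)) ^ k := by
        apply pow_le_pow_left₀ (by positivity)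
        have := Real.add_one_le_exp (1/(k:ℝ))
        linarith
      have h3 : Real.exp (1/(k:ℝ)) ^ k = Real.exp 1 := by
        rw [← Real.exp_nat_mul]
        congr 1; field_simp
      have h4 : Real.exp 1 ≤ 3 := by
        have := Real.exp_one_lt_d9; linarith
      calc (k:ℝ)^k * (1+1/(k:ℝ))^k ≤ (k:ℝ)^k * 3 :=
            mul_le_mul_of_nonneg_left ((h2.trans_eq h3).trans h4) (by positivity)
        _ = 3 * (k:ℝ)^k := by ring
    have hfac : (0:ℝ) < (Nat.factorial k : ℝ) := by exact_mod_cast Nat.factorial_pos k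
    calc ((k+1 : ℕ):ℝ) ^ (k+1) = ((k:ℝ)+1) * ((k:ℝ)+1)^k := by push_cast; ring
      _ ≤ ((k:ℝ)+1) * (3 * (k:ℝ)^k) := by
          apply mul_le_mul_of_nonneg_left h1 (by positivity)
      _ ≤ ((k:ℝ)+1) * (3 * (3^k * (Nat.factorial k : ℝ))) := by
          have := mul_le_mul_of_nonneg_left ih (by norm_num : (0:ℝ) ≤ 3)
          apply mul_le_mul_of_nonneg_left this (by positivity)
      _ = 3 ^ (k+1) * ((k:ℝ)+1) * (Nat.factorial k : ℝ) := by ring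
      _ = 3 ^ (k+1) * (Nat.factorial (k+1) : ℝ) := by
          rw [Nat.factorial_succ]; push_cast; ring

lemma aux_choose_mul_pow_le (n k : ℕ) :
    (n.choose k : ℝ) * (k : ℝ) ^ k ≤ (3 * n : ℝ) ^ k := by
  have h1 : (n.choose k : ℝ) ≤ (n:ℝ) ^ k / (Nat.factorial k : ℝ) :=
    Nat.choose_le_pow_div k n
  have hfac : (0:ℝ) < (Nat.factorial k : ℝ) := by exact_mod_cast Nat.factorial_pos k
  have h2 := aux_pow_le_three_pow_mul_factorial k
  calc (n.choose k : ℝ) * (k:ℝ)^k ≤ ((n:ℝ)^k / (Nat.factorial k : ℝ)) * (3^k * (Nat.factorial k:ℝ)) := by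
        apply mul_le_mul h1 h2 (by positivity) (by positivity)
    _ = 3^k * (n:ℝ)^k := by field_simp
    _ = (3 * n:ℝ)^k := by rw [mul_pow]

lemma aux_nat_le_geom (k : ℕ) : (k : ℝ) ≤ 2 * (3/2 : ℝ) ^ k := by
  induction k with
  | zero => norm_num
  | succ k ih =>
    have h1 : (1:ℝ) ≤ (3/2:ℝ)^k := one_le_pow₀ (by norm_num)
    push_cast
    calc (k:ℝ) + 1 ≤ 2*(3/2:ℝ)^k + (3/2:ℝ)^k := by linarith
      _ = 2 * (3/2:ℝ)^(k+1) := by ring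

lemma aux_sum_k_half (N : ℕ) :
    ∑ k ∈ Finset.range N, (k : ℝ) * (1/2) ^ k ≤ 8 := by
  have h1 : ∀ k : ℕ, (k : ℝ) * (1/2) ^ k ≤ 2 * (3/4 : ℝ) ^ k := by
    intro k
    have := aux_nat_le_geom k
    calc (k:ℝ) * (1/2)^k ≤ (2 * (3/2:ℝ)^k) * (1/2)^k := by
          apply mul_le_mul_of_nonneg_right this (by positivity)
      _ = 2 * (3/4:ℝ)^k := by
          rw [mul_assoc, ← mul_pow]; norm_num
  calc ∑ k ∈ Finset.range N, (k : ℝ) * (1/2) ^ k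
      ≤ ∑ k ∈ Finset.range N, 2 * (3/4:ℝ)^k := Finset.sum_le_sum fun k _ => h1 k
    _ = 2 * ∑ k ∈ Finset.range N, (3/4:ℝ)^k := by rw [Finset.mul_sum]
    _ ≤ 2 * 4 := by
        have hne : (3/4:ℝ) ≠ 1 := by norm_num
        rw [geom_sum_eq hne N]
        have hp : (0:ℝ) ≤ (3/4:ℝ)^N := by positivity
        have : ((3/4:ℝ)^N - 1)/((3/4:ℝ) - 1) = 4*(1 - (3/4:ℝ)^N) := by ring
        rw [this]; nlinarith
    _ = 8 := by norm_num


lemma aux_per_k (d ε γ : ℝ) (hd : 0 < d) (hε : 0 < ε) (hγ : 0 < γ) (hγ1 : γ ≤ 1)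
    (hkey : ((max d 3) ^ (⌈(4:ℝ)+ε⌉₊) : ℝ) * γ ^ (ε/2) ≤ 1/2)
    (n k : ℕ) (hn : 1 ≤ n) (hk : 2 ≤ k) (hkγ : (k:ℝ) ≤ γ * n) :
    (n.choose k : ℝ) * ((k^2).choose ⌈(1+ε/2)*(k:ℝ)⌉₊ : ℝ) *
        (min (d/(n:ℝ)) 1) ^ ⌈(1+ε/2)*(k:ℝ)⌉₊
      ≤ γ⁻¹ * ((k:ℝ)/(n:ℝ)) * (1/2)^k := by
  set B := max d 3 with hBdef
  set M := ⌈(4:ℝ)+ε⌉₊ with hMdef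
  set m := ⌈(1+ε/2)*(k:ℝ)⌉₊ with hmdef
  have hk0 : (0:ℝ) < k := by exact_mod_cast (by omega : 0 < k)
  have hn0 : (0:ℝ) < n := by exact_mod_cast hn
  have hm1 : (1+ε/2)*(k:ℝ) ≤ m := Nat.le_ceil _
  have hm2 : (m:ℝ) < (1+ε/2)*(k:ℝ) + 1 := Nat.ceil_lt_add_one (by positivity)
  have hkm : k < m := by
    have : (k:ℝ) < (m:ℝ) := by nlinarith
    exact_mod_cast this
  set r := m - k with hrdef
  have hmr : m = k + r := by omega
  have hr1 : 1 ≤ r := by omega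
  have hrcast : (r:ℝ) = (m:ℝ) - (k:ℝ) := by
    rw [hrdef]; push_cast [Nat.cast_sub hkm.le]; ring
  have hrge : ε*(k:ℝ)/2 ≤ (r:ℝ) := by rw [hrcast]; nlinarith
  set p := min (d/(n:ℝ)) 1 with hpdef
  have hp0 : 0 ≤ p := le_min (by positivity) one_pos.le
  have hpd : p ≤ d/(n:ℝ) := min_le_left _ _
  -- choose bounds
  have hc1 : (n.choose k : ℝ) ≤ (3*(n:ℝ))^k / (k:ℝ)^k := by
    rw [le_div_iff₀ (by positivity)]
    exact_mod_cast aux_choose_mul_pow_le n k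
  have hc2 : ((k^2).choose m : ℝ) ≤ (3*(k:ℝ)^2)^m / (k:ℝ)^m := by
    have h1 : ((k^2).choose m : ℝ) * (m:ℝ)^m ≤ (3*(k^2:ℕ):ℝ)^m := aux_choose_mul_pow_le _ _
    have hkm' : (k:ℝ)^m ≤ (m:ℝ)^m := by
      apply pow_le_pow_left₀ hk0.le
      exact_mod_cast hkm.le
    have h2 : ((k^2).choose m : ℝ) * (k:ℝ)^m ≤ (3*(k:ℝ)^2)^m := by
      calc ((k^2).choose m : ℝ) * (k:ℝ)^m ≤ ((k^2).choose m : ℝ) * (m:ℝ)^m := by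
            apply mul_le_mul_of_nonneg_left hkm' (by positivity)
        _ ≤ (3*(k^2:ℕ):ℝ)^m := h1
        _ = (3*(k:ℝ)^2)^m := by push_cast; ring
    rw [le_div_iff₀ (by positivity)]
    exact h2
  have hcn0 : (0:ℝ) ≤ (n.choose k : ℝ) := by positivity
  have hstep1 : (n.choose k : ℝ) * ((k^2).choose m : ℝ) * p ^ m
      ≤ ((3*(n:ℝ))^k / (k:ℝ)^k) * ((3*(k:ℝ)^2)^m / (k:ℝ)^m) * (d/(n:ℝ))^m := by
    have hpm : p^m ≤ (d/(n:ℝ))^m := pow_le_pow_left₀ hp0 hpd m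
    apply mul_le_mul (mul_le_mul hc1 hc2 (by positivity) (by positivity)) hpm (by positivity)
    positivity
  have halg : ((3*(n:ℝ))^k / (k:ℝ)^k) * ((3*(k:ℝ)^2)^m / (k:ℝ)^m) * (d/(n:ℝ))^m
      = 3^(k+m) * d^m * ((k:ℝ)/(n:ℝ))^r := by
    rw [hmr]
    have := hn0.ne'; have := hk0.ne'
    simp only [div_pow, mul_pow, pow_add, ← pow_mul]
    field_simp
    ring
  -- constant bound
  have hB3 : (3:ℝ) ≤ B := le_max_right _ _
  have hBd : d ≤ B := le_max_left _ _
  have hB1 : (1:ℝ) ≤ B := by linarith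
  have hexp : k + 2*m ≤ M*k := by
    have hMge : (4:ℝ)+ε ≤ (M:ℝ) := Nat.le_ceil _
    have hk2 : (2:ℝ) ≤ (k:ℝ) := by exact_mod_cast hk
    have : ((k + 2*m : ℕ):ℝ) ≤ ((M*k : ℕ):ℝ) := by
      push_cast
      nlinarith [mul_nonneg (sub_nonneg.mpr hMge) hk0.le]
    exact_mod_cast this
  have hconst : 3^(k+m) * d^m ≤ (B^M)^k := by
    calc (3:ℝ)^(k+m) * d^m ≤ B^(k+m) * B^m := by
          apply mul_le_mul (pow_le_pow_left₀ (by norm_num) hB3 _)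
            (pow_le_pow_left₀ hd.le hBd _) (by positivity) (by positivity)
      _ = B^(k+2*m) := by rw [← pow_add]; ring_nf
      _ ≤ B^(M*k) := pow_le_pow_right₀ hB1 hexp
      _ = (B^M)^k := by rw [pow_mul]
  -- gamma bound
  have hq : (k:ℝ)/(n:ℝ) ≤ γ := by rw [div_le_iff₀ hn0]; linarith
  have hq0 : (0:ℝ) ≤ (k:ℝ)/(n:ℝ) := by positivity
  have hgpow : ((k:ℝ)/(n:ℝ))^r ≤ ((k:ℝ)/(n:ℝ)) * (γ⁻¹ * (γ ^ (ε/2))^k) := by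
    have h1 : ((k:ℝ)/(n:ℝ))^r = ((k:ℝ)/(n:ℝ)) * ((k:ℝ)/(n:ℝ))^(r-1) := by
      conv_lhs => rw [show r = 1 + (r-1) by omega]
      rw [pow_add, pow_one]
    have h2 : ((k:ℝ)/(n:ℝ))^(r-1) ≤ γ^(r-1) := pow_le_pow_left₀ hq0 hq _
    have h3 : γ^(r-1) = γ ^ (((r:ℝ)) - 1) := by
      rw [← Real.rpow_natCast γ (r-1)]
      congr 1
      push_cast [Nat.cast_sub hr1]
      ring
    have h4 : γ ^ (((r:ℝ)) - 1) ≤ γ ^ (ε*(k:ℝ)/2 - 1) :=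
      Real.rpow_le_rpow_of_exponent_ge hγ hγ1 (by linarith)
    have h5 : γ ^ (ε*(k:ℝ)/2 - 1) = γ⁻¹ * (γ ^ (ε/2))^k := by
      rw [Real.rpow_sub hγ, Real.rpow_one]
      rw [show ε*(k:ℝ)/2 = (ε/2) * (k:ℝ) by ring, Real.rpow_mul hγ.le,
        Real.rpow_natCast]
      ring
    calc ((k:ℝ)/(n:ℝ))^r = ((k:ℝ)/(n:ℝ)) * ((k:ℝ)/(n:ℝ))^(r-1) := h1
      _ ≤ ((k:ℝ)/(n:ℝ)) * γ^(r-1) := mul_le_mul_of_nonneg_left h2 hq0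
      _ ≤ ((k:ℝ)/(n:ℝ)) * (γ⁻¹ * (γ ^ (ε/2))^k) := by
          rw [h3, ← h5]
          exact mul_le_mul_of_nonneg_left h4 hq0
  calc (n.choose k : ℝ) * ((k^2).choose m : ℝ) * p ^ m
      ≤ ((3*(n:ℝ))^k / (k:ℝ)^k) * ((3*(k:ℝ)^2)^m / (k:ℝ)^m) * (d/(n:ℝ))^m := hstep1
    _ = 3^(k+m) * d^m * ((k:ℝ)/(n:ℝ))^r := halg
    _ ≤ (B^M)^k * (((k:ℝ)/(n:ℝ)) * (γ⁻¹ * (γ ^ (ε/2))^k)) := by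
        apply mul_le_mul hconst hgpow (pow_nonneg hq0 r) (by positivity)
    _ = γ⁻¹ * ((k:ℝ)/(n:ℝ)) * ((B^M) * γ^(ε/2))^k := by rw [mul_pow]; ring
    _ ≤ γ⁻¹ * ((k:ℝ)/(n:ℝ)) * (1/2)^k := by
        apply mul_le_mul_of_nonneg_left (pow_le_pow_left₀ (by positivity) hkey k)
        positivity

lemma aux_cylinder_measure {ι : Type*} [Fintype ι] (p : NNReal) (h : p ≤ 1)
    (T : Finset ι) :
    Measure.pi (fun _ : ι => (PMF.bernoulli p h).toMeasure)
      {ω : ι → Bool | ∀ e ∈ T, ω e = true} = (p : ENNReal) ^ T.card := by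
  classical
  have hset : {ω : ι → Bool | ∀ e ∈ T, ω e = true}
      = Set.pi Set.univ (fun e => if e ∈ T then ({true} : Set Bool) else Set.univ) := by
    ext ω
    simp only [Set.mem_setOf_eq, Set.mem_pi, Set.mem_univ, forall_true_left]
    constructor
    · intro hw e
      by_cases he : e ∈ T <;> simp [he, hw]
    · intro hw e he
      have := hw e
      simp [he] at this
      exact this
  rw [hset, Measure.pi_pi]
  have hsing : ((PMF.bernoulli p h).toMeasure) {true} = (p : ENNReal) := by
    rw [PMF.toMeasure_apply_singleton _ _ (measurableSet_singleton _)]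
    rfl
  have huniv : ((PMF.bernoulli p h).toMeasure) Set.univ = 1 := measure_univ
  calc ∏ e : ι, ((PMF.bernoulli p h).toMeasure)
        (if e ∈ T then ({true} : Set Bool) else Set.univ)
      = ∏ e : ι, (if e ∈ T then (p : ENNReal) else 1) := by
        apply Finset.prod_congr rfl
        intro e _
        split_ifs with he
        · exact hsing
        · exact huniv
    _ = ∏ e ∈ Finset.univ ∩ T, (p : ENNReal) := by
        rw [← Finset.prod_ite_mem]
    _ = p ^ T.card := by
        rw [Finset.univ_inter, Finset.prod_const]


open Classical in
lemma aux_measure_bound (d ε γ : ℝ) (hd : 0 < d) (hε : 0 < ε) (hγ : 0 < γ) (n : ℕ) :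
    Measure.pi
        (fun _ : {e : Sym2 (Fin n) // ¬ e.IsDiag} =>
          (PMF.bernoulli (Real.toNNReal (min (d / (n : ℝ)) 1))
            (by
              exact_mod_cast Real.toNNReal_le_one.mpr (min_le_right _ _))).toMeasure)
        {ω : {e : Sym2 (Fin n) // ¬ e.IsDiag} → Bool |
          ∃ S : Finset (Fin n), 2 ≤ S.card ∧ (S.card : ℝ) ≤ γ * (n : ℝ) ∧
            (1 + ε / 2) * (S.card : ℝ) ≤
              ((Finset.univ.filter
                (fun e : {e : Sym2 (Fin n) // ¬ e.IsDiag} =>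
                  ω e = true ∧ ∀ v ∈ e.val, v ∈ S)).card : ℝ)}
      ≤ ENNReal.ofReal (∑ k ∈ Finset.range (n+1),
          if 2 ≤ k ∧ (k:ℝ) ≤ γ * n then
            (n.choose k : ℝ) * ((k^2).choose ⌈(1+ε/2)*(k:ℝ)⌉₊ : ℝ) *
              (min (d/(n:ℝ)) 1) ^ ⌈(1+ε/2)*(k:ℝ)⌉₊
          else 0) := by
  classical
  set ι := {e : Sym2 (Fin n) // ¬ e.IsDiag}
  set p : ℝ := min (d/(n:ℝ)) 1 with hpdef
  have hp0 : 0 ≤ p := le_min (by positivity) one_pos.le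
  have hp1 : (Real.toNNReal p : ENNReal) ≤ 1 := by
    exact_mod_cast Real.toNNReal_le_one.mpr (min_le_right _ _)
  set phat : ENNReal := (Real.toNNReal p : ENNReal) with hphat
  set μ := Measure.pi (fun _ : ι => (PMF.bernoulli (Real.toNNReal p) (Real.toNNReal_le_one.mpr (min_le_right _ _))).toMeasure) with hμ
  set mfun : ℕ → ℕ := fun k => ⌈(1+ε/2)*(k:ℝ)⌉₊ with hmfun
  set edges : Finset (Fin n) → Finset ι :=
    fun S => Finset.univ.filter (fun e : ι => ∀ v ∈ e.val, v ∈ S) with hedges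
  set 𝒮 : Finset (Finset (Fin n)) :=
    Finset.univ.filter (fun S => 2 ≤ S.card ∧ (S.card:ℝ) ≤ γ * n) with h𝒮
  -- inclusion into union of cylinders
  have hsub : {ω : ι → Bool |
      ∃ S : Finset (Fin n), 2 ≤ S.card ∧ (S.card : ℝ) ≤ γ * (n : ℝ) ∧
        (1 + ε / 2) * (S.card : ℝ) ≤
          ((Finset.univ.filter
            (fun e : ι => ω e = true ∧ ∀ v ∈ e.val, v ∈ S)).card : ℝ)}
      ⊆ ⋃ S ∈ 𝒮, ⋃ T ∈ Finset.powersetCard (mfun S.card) (edges S),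
          {ω : ι → Bool | ∀ e ∈ T, ω e = true} := by
    intro ω hω
    obtain ⟨S, hS1, hS2, hS3⟩ := hω
    set F := Finset.univ.filter (fun e : ι => ω e = true ∧ ∀ v ∈ e.val, v ∈ S) with hF
    have hmF : mfun S.card ≤ F.card := by
      apply Nat.ceil_le.mpr
      exact_mod_cast hS3
    obtain ⟨T, hTF, hTcard⟩ := Finset.exists_subset_card_eq hmF
    simp only [Set.mem_iUnion]
    refine ⟨S, by simp [h𝒮, hS1, hS2], T, ?_, ?_⟩
    · rw [Finset.mem_powersetCard]
      refine ⟨?_, hTcard⟩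
      intro e heT
      have := hTF heT
      rw [hF, Finset.mem_filter] at this
      simp only [hedges, Finset.mem_filter, Finset.mem_univ, true_and]
      exact this.2.2
    · intro e heT
      have := hTF heT
      rw [hF, Finset.mem_filter] at this
      exact this.2.1
  -- union bound
  have hstep : μ {ω : ι → Bool |
      ∃ S : Finset (Fin n), 2 ≤ S.card ∧ (S.card : ℝ) ≤ γ * (n : ℝ) ∧
        (1 + ε / 2) * (S.card : ℝ) ≤
          ((Finset.univ.filter
            (fun e : ι => ω e = true ∧ ∀ v ∈ e.val, v ∈ S)).card : ℝ)}
      ≤ ∑ S ∈ 𝒮, ((S.card^2).choose (mfun S.card) : ENNReal) * phat ^ (mfun S.card) := by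
    refine (measure_mono hsub).trans ?_
    refine (measure_biUnion_finset_le _ _).trans ?_
    apply Finset.sum_le_sum
    intro S _
    refine (measure_biUnion_finset_le _ _).trans ?_
    have heach : ∀ T ∈ Finset.powersetCard (mfun S.card) (edges S),
        μ {ω : ι → Bool | ∀ e ∈ T, ω e = true} = phat ^ (mfun S.card) := by
      intro T hT
      rw [hμ, aux_cylinder_measure (Real.toNNReal p) (Real.toNNReal_le_one.mpr (min_le_right _ _)) T,
        (Finset.mem_powersetCard.mp hT).2]
    rw [Finset.sum_congr rfl heach, Finset.sum_const, Finset.card_powersetCard,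
      nsmul_eq_mul]
    apply mul_le_mul_left
    have hcard : (edges S).card ≤ S.card^2 := by
      have h1 : (edges S).card ≤ (S ×ˢ S).card := by
        apply Finset.card_le_card_of_injOn (fun e : ι => (e.val).out)
        · intro e he
          rw [Finset.mem_coe, Finset.mem_product]
          simp only [Finset.mem_coe, hedges, Finset.mem_filter] at he
          exact ⟨he.2 _ (Sym2.out_fst_mem e.val), he.2 _ (Sym2.out_snd_mem e.val)⟩
        · intro a _ b _ hab
          simp only at hab
          exact Subtype.ext (by rw [← Quot.out_eq a.val, ← Quot.out_eq b.val, hab])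
      simpa [Finset.card_product, sq] using h1
    exact_mod_cast Nat.cast_le.mpr (Nat.choose_le_choose _ hcard)
  refine hstep.trans ?_
  have hterm : ∀ S ∈ 𝒮, ((S.card^2).choose (mfun S.card) : ENNReal) * phat ^ (mfun S.card)
      = ENNReal.ofReal (((S.card^2).choose (mfun S.card) : ℝ) * p ^ (mfun S.card)) := by
    intro S _
    have hph : phat = ENNReal.ofReal p := rfl
    rw [hph, ENNReal.ofReal_mul (by positivity), ENNReal.ofReal_natCast,
      ← ENNReal.ofReal_pow hp0]
  rw [Finset.sum_congr rfl hterm,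
    ← ENNReal.ofReal_sum_of_nonneg (fun S _ => by positivity)]
  apply ENNReal.ofReal_le_ofReal
  have hgroup : ∑ S ∈ 𝒮, (((S.card^2).choose (mfun S.card) : ℝ) * p ^ (mfun S.card))
      = ∑ k ∈ Finset.range (n+1), if 2 ≤ k ∧ (k:ℝ) ≤ γ*n then
          (n.choose k : ℝ) * (((k^2).choose (mfun k) : ℝ) * p ^ (mfun k)) else 0 := by
    rw [h𝒮, Finset.sum_filter]
    rw [show (Finset.univ : Finset (Finset (Fin n))) = Finset.univ.powerset from
      Finset.powerset_univ.symm]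
    rw [Finset.powerset_card_disjiUnion]
    erw [Finset.sum_disjiUnion]
    rw [show (Finset.univ : Finset (Fin n)).card = n by
      rw [Finset.card_univ, Fintype.card_fin]]
    apply Finset.sum_congr rfl
    intro k _
    rw [Finset.sum_congr rfl (fun S hS => by
      rw [(Finset.mem_powersetCard.mp hS).2]),
      Finset.sum_const, Finset.card_powersetCard,
      show (Finset.univ : Finset (Fin n)).card = n by
        rw [Finset.card_univ, Fintype.card_fin],
      nsmul_eq_mul]
    simp [mul_ite]
  rw [hgroup]
  apply Finset.sum_le_sum
  intro k _
  split_ifs with h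
  · rw [← mul_assoc]
  · exact le_rfl

end AuxER

open Classical in
/-- For all `d > 0` and `ε > 0` there is `γ > 0` such that, in the Erdős–Rényi random
graph `G(n, d/n)` — here modelled by independent `Bernoulli (min (d/n) 1)` indicators,
one for each non-diagonal unordered pair of vertices of `Fin n` — the probability that
some vertex set `S` with `2 ≤ |S| ≤ γ·n` spans at least `(1 + ε/2)·|S|` edges
(i.e. has average degree at least `2 + ε`) tends to `0` as `n → ∞`. -/
theorem er_no_dense_small_subsets (d ε : ℝ) (hd : 0 < d) (hε : 0 < ε) :
    ∃ γ : ℝ, 0 < γ ∧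
      Tendsto
        (fun n : ℕ =>
          Measure.pi
            (fun _ : {e : Sym2 (Fin n) // ¬ e.IsDiag} =>
              (PMF.bernoulli (Real.toNNReal (min (d / (n : ℝ)) 1))
                (by
                  exact_mod_cast Real.toNNReal_le_one.mpr (min_le_right _ _))).toMeasure)
            {ω : {e : Sym2 (Fin n) // ¬ e.IsDiag} → Bool |
              ∃ S : Finset (Fin n), 2 ≤ S.card ∧ (S.card : ℝ) ≤ γ * (n : ℝ) ∧
                (1 + ε / 2) * (S.card : ℝ) ≤
                  ((Finset.univ.filter
                    (fun e : {e : Sym2 (Fin n) // ¬ e.IsDiag} =>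
                      ω e = true ∧ ∀ v ∈ e.val, v ∈ S)).card : ℝ)})
        atTop (𝓝 0) := by
  classical
  set B : ℝ := max d 3 with hBdef
  set M : ℕ := ⌈(4:ℝ)+ε⌉₊ with hMdef
  set A : ℝ := B ^ M with hAdef
  have hB1 : (1:ℝ) ≤ B := le_trans (by norm_num) (le_max_right d 3)
  have hA1 : (1:ℝ) ≤ A := one_le_pow₀ hB1
  have hApos : (0:ℝ) < A := lt_of_lt_of_le one_pos hA1
  set γ : ℝ := ((2*A)⁻¹) ^ ((2:ℝ)/ε) with hγdef
  have hx0 : (0:ℝ) < (2*A)⁻¹ := by positivity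
  have hx1 : ((2*A)⁻¹ : ℝ) ≤ 1 := by
    rw [inv_le_one_iff₀]; right; linarith
  have hγpos : 0 < γ := Real.rpow_pos_of_pos hx0 _
  have hγ1 : γ ≤ 1 := Real.rpow_le_one hx0.le hx1 (by positivity)
  have hkey : A * γ ^ (ε/2) ≤ 1/2 := by
    have h1 : γ ^ (ε/2) = (2*A)⁻¹ := by
      rw [hγdef, ← Real.rpow_mul hx0.le]
      rw [show (2:ℝ)/ε * (ε/2) = 1 by field_simp]
      exact Real.rpow_one _
    rw [h1]
    rw [show A * (2*A)⁻¹ = 1/2 by field_simp]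
  refine ⟨γ, hγpos, ?_⟩
  have hupper : ∀ᶠ n : ℕ in atTop,
      Measure.pi
        (fun _ : {e : Sym2 (Fin n) // ¬ e.IsDiag} =>
          (PMF.bernoulli (Real.toNNReal (min (d / (n : ℝ)) 1))
            (by
              exact_mod_cast Real.toNNReal_le_one.mpr (min_le_right _ _))).toMeasure)
        {ω : {e : Sym2 (Fin n) // ¬ e.IsDiag} → Bool |
          ∃ S : Finset (Fin n), 2 ≤ S.card ∧ (S.card : ℝ) ≤ γ * (n : ℝ) ∧
            (1 + ε / 2) * (S.card : ℝ) ≤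
              ((Finset.univ.filter
                (fun e : {e : Sym2 (Fin n) // ¬ e.IsDiag} =>
                  ω e = true ∧ ∀ v ∈ e.val, v ∈ S)).card : ℝ)}
      ≤ ENNReal.ofReal (8 * γ⁻¹ / (n:ℝ)) := by
    filter_upwards [eventually_ge_atTop 1] with n hn
    refine (aux_measure_bound d ε γ hd hε hγpos n).trans ?_
    apply ENNReal.ofReal_le_ofReal
    have hn0 : (0:ℝ) < n := by exact_mod_cast hn
    calc ∑ k ∈ Finset.range (n+1),
          (if 2 ≤ k ∧ (k:ℝ) ≤ γ * n then
            (n.choose k : ℝ) * ((k^2).choose ⌈(1+ε/2)*(k:ℝ)⌉₊ : ℝ) *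
              (min (d/(n:ℝ)) 1) ^ ⌈(1+ε/2)*(k:ℝ)⌉₊
          else 0)
        ≤ ∑ k ∈ Finset.range (n+1), γ⁻¹ * ((k:ℝ)/(n:ℝ)) * (1/2)^k := by
          apply Finset.sum_le_sum
          intro k _
          split_ifs with h
          · exact aux_per_k d ε γ hd hε hγpos hγ1 hkey n k hn h.1 h.2
          · positivity
      _ = γ⁻¹ * (1/(n:ℝ)) * ∑ k ∈ Finset.range (n+1), (k:ℝ) * (1/2)^k := by
          rw [Finset.mul_sum]
          apply Finset.sum_congr rfl
          intro k _
          ring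
      _ ≤ γ⁻¹ * (1/(n:ℝ)) * 8 := by
          apply mul_le_mul_of_nonneg_left (aux_sum_k_half _) (by positivity)
      _ = 8 * γ⁻¹ / (n:ℝ) := by ring
  have h0 : Tendsto (fun n : ℕ => ENNReal.ofReal (8 * γ⁻¹ / (n:ℝ))) atTop (𝓝 0) := by
    rw [show (0:ENNReal) = ENNReal.ofReal 0 by simp]
    exact ENNReal.tendsto_ofReal (tendsto_const_div_atTop_nhds_zero_nat _)
  exact tendsto_of_tendsto_of_tendsto_of_le_of_le' tendsto_const_nhds h0
    (Filter.Eventually.of_forall (fun n => zero_le)) hupper
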